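/- Let Z be a standard Gaussian random variable, fix c ∈ ℝ, and for v ≥ 0 let ξ_v be a centered Gaussian with variance v, independent of Z; set z_v = cZ + ξ_v and define the expected BCE loss L(z_v) = E[−σ(Z)·z_v + log(1 + e^{z_v})]. Then L is strictly increasing in the noise variance: if 0 ≤ v < u, then L(z_v) < L(z_u). -/

import Mathlib

open MeasureTheory ProbabilityTheory

/-- The sigmoid (logistic) function `σ(z) = 1 / (1 + e^{-z})`. -/
noncomputable def sigmoid (z : ℝ) : ℝ := 1 / (1 + Real.exp (-z))

/-- Expected BCE loss against soft labels `σ(Z)`: with `y | Z ~ Bernoulli(σ(Z))`, the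
expected BCE loss of a logit random variable `f` is `E[−σ(Z)·f + log(1+e^f)]`. -/
noncomputable def softLoss {Ω : Type*} [MeasurableSpace Ω] (P : Measure Ω)
    (Z f : Ω → ℝ) : ℝ :=
  ∫ ω, (-(sigmoid (Z ω)) * f ω + Real.log (1 + Real.exp (f ω))) ∂P

/-- softplus -/
noncomputable def sp (t : ℝ) : ℝ := Real.log (1 + Real.exp t)

lemma one_add_exp_pos (t : ℝ) : (0:ℝ) < 1 + Real.exp t := by positivity

lemma continuous_sp : Continuous sp :=
  (continuous_const.add Real.continuous_exp).log fun t => (one_add_exp_pos t).ne'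

lemma sp_nonneg (t : ℝ) : 0 ≤ sp t :=
  Real.log_nonneg (by linarith [Real.exp_pos t])

lemma sp_le (t : ℝ) : sp t ≤ Real.log 2 + |t| := by
  have h1 : (1:ℝ) + Real.exp t ≤ 2 * Real.exp |t| := by
    have h2 : Real.exp t ≤ Real.exp |t| := Real.exp_le_exp.2 (le_abs_self t)
    have h3 : (1:ℝ) ≤ Real.exp |t| := Real.one_le_exp (abs_nonneg t)
    linarith
  calc sp t ≤ Real.log (2 * Real.exp |t|) :=
        Real.log_le_log (one_add_exp_pos t) h1
    _ = Real.log 2 + |t| := by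
        rw [Real.log_mul two_ne_zero (Real.exp_ne_zero _), Real.log_exp]

lemma hasDerivAt_sp (t : ℝ) :
    HasDerivAt sp (Real.exp t / (1 + Real.exp t)) t := by
  have h1 : HasDerivAt (fun t : ℝ => 1 + Real.exp t) (Real.exp t) t :=
    (Real.hasDerivAt_exp t).const_add 1
  exact h1.log (one_add_exp_pos t).ne'

lemma strictConvexOn_sp : StrictConvexOn ℝ Set.univ sp := by
  refine StrictMono.strictConvexOn_univ_of_deriv continuous_sp ?_
  have hderiv : deriv sp = fun t => Real.exp t / (1 + Real.exp t) :=
    funext fun t => (hasDerivAt_sp t).deriv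
  rw [hderiv]
  intro a b hab
  have ha := one_add_exp_pos a
  have hb := one_add_exp_pos b
  rw [div_lt_div_iff₀ ha hb]
  have h := Real.exp_lt_exp.2 hab
  nlinarith [Real.exp_pos a, Real.exp_pos b]

lemma sp_sym_lt {t y s1 s2 : ℝ} (hy : y ≠ 0) (hs1 : 0 ≤ s1) (h12 : s1 < s2) :
    sp (t + s1 * y) + sp (t - s1 * y) < sp (t + s2 * y) + sp (t - s2 * y) := by
  have hs2 : 0 < s2 := lt_of_le_of_lt hs1 h12
  set a := (s2 + s1) / (2 * s2) with ha
  set b := (s2 - s1) / (2 * s2) with hb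
  have hab : a + b = 1 := by
    rw [ha, hb, ← add_div, div_eq_one_iff_eq (by positivity)]
    ring
  have ha0 : 0 < a := by positivity
  have hb0 : 0 < b := div_pos (by linarith) (by linarith)
  have hpq : t + s2 * y ≠ t - s2 * y := by
    intro h
    apply hy
    have : s2 * y = - (s2 * y) := by linarith
    have h2 : s2 * y = 0 := by linarith
    rcases mul_eq_zero.1 h2 with h3 | h3
    · exact absurd h3 hs2.ne'
    · exact h3
  have key1 := strictConvexOn_sp.2 (Set.mem_univ (t + s2 * y)) (Set.mem_univ (t - s2 * y))
    hpq ha0 hb0 hab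
  have key2 := strictConvexOn_sp.2 (Set.mem_univ (t + s2 * y)) (Set.mem_univ (t - s2 * y))
    hpq hb0 ha0 (by linarith)
  simp only [smul_eq_mul] at key1 key2
  have e1 : a * (t + s2 * y) + b * (t - s2 * y) = t + s1 * y := by
    rw [ha, hb]; field_simp; ring
  have e2 : b * (t + s2 * y) + a * (t - s2 * y) = t - s1 * y := by
    rw [ha, hb]; field_simp; ring
  rw [e1] at key1
  rw [e2] at key2
  calc sp (t + s1 * y) + sp (t - s1 * y)
      < (a * sp (t + s2 * y) + b * sp (t - s2 * y)) +
        (b * sp (t + s2 * y) + a * sp (t - s2 * y)) := add_lt_add key1 key2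
    _ = (a + b) * (sp (t + s2 * y) + sp (t - s2 * y)) := by ring
    _ = sp (t + s2 * y) + sp (t - s2 * y) := by rw [hab, one_mul]

lemma integrable_id_gaussian : Integrable (fun x : ℝ => x) (gaussianReal 0 1) := by
  rw [gaussianReal_of_var_ne_zero 0 one_ne_zero,
    integrable_withDensity_iff (measurable_gaussianPDF 0 1)
      (Filter.Eventually.of_forall fun x => ENNReal.ofReal_lt_top)]
  have h : Integrable (fun x : ℝ => (Real.sqrt (2 * Real.pi))⁻¹ *
      (x ^ (1:ℝ) * Real.exp (-(1/2) * x ^ 2))) volume :=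
    (integrable_rpow_mul_exp_neg_mul_sq (by norm_num : (0:ℝ) < 1/2)
      (by norm_num : (-1:ℝ) < 1)).const_mul _
  refine h.congr (Filter.Eventually.of_forall fun x => ?_)
  simp only [gaussianPDF, gaussianPDFReal, NNReal.coe_one, mul_one, sub_zero,
    ENNReal.toReal_ofReal (by positivity : (0:ℝ) ≤ (Real.sqrt (2 * Real.pi))⁻¹ *
      Real.exp (-x ^ 2 / 2)), Real.rpow_one]
  ring_nf

noncomputable def FF (c : ℝ) (p : ℝ × ℝ) : ℝ :=
  -(sigmoid p.1) * (c * p.1 + p.2) + sp (c * p.1 + p.2)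

lemma continuous_sigmoid' : Continuous sigmoid :=
  continuous_const.div (continuous_const.add (Real.continuous_exp.comp continuous_neg))
    fun z => (one_add_exp_pos (-z)).ne'

lemma sigmoid_abs_le (z : ℝ) : |sigmoid z| ≤ 1 := by
  rw [abs_le]
  have h := one_add_exp_pos (-z)
  constructor
  · have : (0:ℝ) ≤ 1 / (1 + Real.exp (-z)) := by positivity
    simpa [sigmoid] using this.trans' (by norm_num)
  · rw [sigmoid, div_le_one h]
    linarith [Real.exp_pos (-z)]

lemma continuous_FF (c : ℝ) : Continuous (FF c) := by
  have h : Continuous fun p : ℝ × ℝ => c * p.1 + p.2 :=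
    (continuous_const.mul continuous_fst).add continuous_snd
  exact ((continuous_sigmoid'.comp continuous_fst).neg.mul h).add (continuous_sp.comp h)

lemma FF_abs_le (c : ℝ) (p : ℝ × ℝ) :
    |FF c p| ≤ 2 * |c| * |p.1| + 2 * |p.2| + Real.log 2 := by
  have h1 : |c * p.1 + p.2| ≤ |c| * |p.1| + |p.2| := by
    calc |c * p.1 + p.2| ≤ |c * p.1| + |p.2| := abs_add_le _ _
      _ = |c| * |p.1| + |p.2| := by rw [abs_mul]
  have h2 : |-(sigmoid p.1) * (c * p.1 + p.2)| ≤ |c| * |p.1| + |p.2| := by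
    rw [abs_mul, abs_neg]
    calc |sigmoid p.1| * |c * p.1 + p.2| ≤ 1 * |c * p.1 + p.2| :=
          mul_le_mul_of_nonneg_right (sigmoid_abs_le _) (abs_nonneg _)
      _ ≤ |c| * |p.1| + |p.2| := by rw [one_mul]; exact h1
  have h3 : |sp (c * p.1 + p.2)| ≤ Real.log 2 + (|c| * |p.1| + |p.2|) := by
    rw [abs_of_nonneg (sp_nonneg _)]
    exact (sp_le _).trans (by linarith)
  calc |FF c p| ≤ |-(sigmoid p.1) * (c * p.1 + p.2)| + |sp (c * p.1 + p.2)| := abs_add_le _ _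
    _ ≤ 2 * |c| * |p.1| + 2 * |p.2| + Real.log 2 := by linarith

noncomputable abbrev γ2 : Measure (ℝ × ℝ) := (gaussianReal 0 1).prod (gaussianReal 0 1)

lemma integrable_abs_fst :
    Integrable (fun p : ℝ × ℝ => |p.1|) γ2 := by
  have h1 : Integrable (fun x : ℝ => |x|) (gaussianReal 0 1) := integrable_id_gaussian.abs
  have hm : Measure.map Prod.fst γ2 = gaussianReal 0 1 := by
    simp [Measure.map_fst_prod]
  rw [← hm] at h1
  exact (integrable_map_measure continuous_abs.aestronglyMeasurable
    measurable_fst.aemeasurable).mp h1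

lemma integrable_abs_snd :
    Integrable (fun p : ℝ × ℝ => |p.2|) γ2 := by
  have h1 : Integrable (fun x : ℝ => |x|) (gaussianReal 0 1) := integrable_id_gaussian.abs
  have hm : Measure.map Prod.snd γ2 = gaussianReal 0 1 := by
    simp [Measure.map_snd_prod]
  rw [← hm] at h1
  exact (integrable_map_measure continuous_abs.aestronglyMeasurable
    measurable_snd.aemeasurable).mp h1

lemma integrable_FF_smul (c s : ℝ) :
    Integrable (fun p : ℝ × ℝ => FF c (p.1, s * p.2)) γ2 := by
  have hbound : Integrable (fun p : ℝ × ℝ =>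
      2 * |c| * |p.1| + 2 * |s| * |p.2| + Real.log 2) γ2 :=
    ((integrable_abs_fst.const_mul _).add (integrable_abs_snd.const_mul _)).add
      (integrable_const _)
  refine Integrable.mono' hbound ?_ (Filter.Eventually.of_forall fun p => ?_)
  · exact ((continuous_FF c).comp
      (continuous_fst.prodMk (continuous_const.mul continuous_snd))).aestronglyMeasurable
  · have := FF_abs_le c (p.1, s * p.2)
    simp only [abs_mul] at this ⊢
    calc ‖FF c (p.1, s * p.2)‖ = |FF c (p.1, s * p.2)| := rfl
      _ ≤ 2 * |c| * |p.1| + 2 * (|s| * |p.2|) + Real.log 2 := by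
          simpa [abs_mul] using this
      _ = 2 * |c| * |p.1| + 2 * |s| * |p.2| + Real.log 2 := by ring

lemma gaussian_map_sqrt_smul (w : NNReal) :
    (gaussianReal 0 1).map (fun y => Real.sqrt w * y) = gaussianReal 0 w := by
  have h := gaussianReal_map_const_mul (μ := 0) (v := 1) (Real.sqrt w)
  simp only [mul_zero, mul_one] at h
  convert h using 2
  ext
  simp [Real.sq_sqrt w.coe_nonneg]

lemma gaussian_map_neg :
    (gaussianReal 0 1).map (fun y : ℝ => -y) = gaussianReal 0 1 := by
  have h := gaussianReal_map_const_mul (μ := 0) (v := 1) (-1)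
  simp only [mul_zero, neg_one_mul] at h
  rw [h]
  congr 1
  ext
  norm_num

lemma softLoss_eq {Ω : Type*} [MeasurableSpace Ω] (P : Measure Ω) [IsProbabilityMeasure P]
    (Z ξ : Ω → ℝ) (c : ℝ) (w : NNReal)
    (hZ : Measure.map Z P = gaussianReal 0 1)
    (hξ : Measure.map ξ P = gaussianReal 0 w)
    (hind : IndepFun Z ξ P) :
    softLoss P Z (fun ω => c * Z ω + ξ ω)
      = ∫ p, FF c (p.1, Real.sqrt w * p.2) ∂γ2 := by
  have hZm : AEMeasurable Z P := aemeasurable_of_map_neZero (by rw [hZ]; infer_instance)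
  have hξm : AEMeasurable ξ P := aemeasurable_of_map_neZero (by rw [hξ]; infer_instance)
  have hpair : P.map (fun ω => (Z ω, ξ ω)) = (gaussianReal 0 1).prod (gaussianReal 0 w) := by
    rw [(indepFun_iff_map_prod_eq_prod_map_map hZm hξm).mp hind, hZ, hξ]
  have hprod : (gaussianReal 0 1).prod (gaussianReal 0 w)
      = γ2.map (Prod.map (id : ℝ → ℝ) (fun y => Real.sqrt w * y)) := by
    have hm : Measurable fun y : ℝ => Real.sqrt (w : ℝ) * y := measurable_id.const_mul _
    have h := Measure.map_prod_map (gaussianReal 0 1) (gaussianReal 0 1) measurable_id hm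
    rw [Measure.map_id, gaussian_map_sqrt_smul] at h
    exact h
  have hm : Measurable fun y : ℝ => Real.sqrt (w : ℝ) * y := measurable_id.const_mul _
  have h1 : softLoss P Z (fun ω => c * Z ω + ξ ω) = ∫ ω, FF c (Z ω, ξ ω) ∂P := rfl
  rw [h1, ← integral_map (hZm.prodMk hξm) (continuous_FF c).aestronglyMeasurable,
    hpair, hprod, integral_map (measurable_id.prodMap hm).aemeasurable
      (continuous_FF c).aestronglyMeasurable]
  rfl

lemma sym_eq (c s : ℝ) :
    ∫ p, FF c (p.1, s * p.2) ∂γ2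
      = ∫ p, (FF c (p.1, s * p.2) + FF c (p.1, -(s * p.2))) / 2 ∂γ2 := by
  have hneg : γ2.map (Prod.map (id : ℝ → ℝ) (fun y : ℝ => -y)) = γ2 := by
    have h := Measure.map_prod_map (gaussianReal 0 1) (gaussianReal 0 1)
      measurable_id measurable_neg
    rw [Measure.map_id, gaussian_map_neg] at h
    exact h.symm
  have hcont : Continuous fun p : ℝ × ℝ => FF c (p.1, s * p.2) :=
    (continuous_FF c).comp (continuous_fst.prodMk (continuous_const.mul continuous_snd))
  have h2 : ∫ p, FF c (p.1, s * p.2) ∂γ2 = ∫ p, FF c (p.1, -(s * p.2)) ∂γ2 := by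
    conv_lhs => rw [← hneg, integral_map (measurable_id.prodMap measurable_neg).aemeasurable
      hcont.aestronglyMeasurable]
    refine integral_congr_ae (Filter.Eventually.of_forall fun p => ?_)
    simp only [Prod.map, id_eq]
    ring_nf
  have hint1 := integrable_FF_smul c s
  have hint2 : Integrable (fun p : ℝ × ℝ => FF c (p.1, -(s * p.2))) γ2 := by
    simpa [neg_mul] using integrable_FF_smul c (-s)
  calc ∫ p, FF c (p.1, s * p.2) ∂γ2
      = (∫ p, FF c (p.1, s * p.2) ∂γ2 + ∫ p, FF c (p.1, -(s * p.2)) ∂γ2) / 2 := by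
        rw [← h2]; ring
    _ = ∫ p, (FF c (p.1, s * p.2) + FF c (p.1, -(s * p.2))) / 2 ∂γ2 := by
        rw [← integral_add hint1 hint2, integral_div]

/-- For `z_v = cZ + ξ_v` with `Z` standard Gaussian and `ξ_v ~ N(0,v)` independent of `Z`,
the expected BCE loss is strictly increasing in the noise variance: if `0 ≤ v < u` then
`L(z_v) < L(z_u)`. -/
theorem softLoss_strict_mono_in_noise_variance
    {Ω : Type*} [MeasurableSpace Ω] (P : Measure Ω) [IsProbabilityMeasure P]
    (Z ξv ξu : Ω → ℝ) (c : ℝ) (v u : NNReal) (hvu : v < u)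
    (hZ : Measure.map Z P = gaussianReal 0 1)
    (hξv : Measure.map ξv P = gaussianReal 0 v)
    (hξu : Measure.map ξu P = gaussianReal 0 u)
    (hindv : IndepFun Z ξv P) (hindu : IndepFun Z ξu P) :
    softLoss P Z (fun ω => c * Z ω + ξv ω) < softLoss P Z (fun ω => c * Z ω + ξu ω) := by
  rw [softLoss_eq P Z ξv c v hZ hξv hindv, softLoss_eq P Z ξu c u hZ hξu hindu,
    sym_eq c (Real.sqrt v), sym_eq c (Real.sqrt u)]
  set sv := Real.sqrt (v : ℝ) with hsv_def
  set su := Real.sqrt (u : ℝ) with hsu_def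
  have hsv : 0 ≤ sv := Real.sqrt_nonneg _
  have hlt : sv < su := Real.sqrt_lt_sqrt v.coe_nonneg (by exact_mod_cast hvu)
  set Gv : ℝ × ℝ → ℝ := fun p => (FF c (p.1, sv * p.2) + FF c (p.1, -(sv * p.2))) / 2 with hGv
  set Gu : ℝ × ℝ → ℝ := fun p => (FF c (p.1, su * p.2) + FF c (p.1, -(su * p.2))) / 2 with hGu
  have hintGv : Integrable Gv γ2 :=
    ((integrable_FF_smul c sv).add
      (by simpa [neg_mul] using integrable_FF_smul c (-sv))).div_const 2
  have hintGu : Integrable Gu γ2 :=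
    ((integrable_FF_smul c su).add
      (by simpa [neg_mul] using integrable_FF_smul c (-su))).div_const 2
  have hG : ∀ (s : ℝ) (p : ℝ × ℝ),
      (FF c (p.1, s * p.2) + FF c (p.1, -(s * p.2))) / 2
        = -(sigmoid p.1) * (c * p.1)
          + (sp (c * p.1 + s * p.2) + sp (c * p.1 - s * p.2)) / 2 := by
    intro s p
    simp only [FF]
    rw [show c * p.1 + -(s * p.2) = c * p.1 - s * p.2 from by ring]
    ring
  have hpt : ∀ p : ℝ × ℝ, p.2 ≠ 0 → Gv p < Gu p := by
    intro p hp
    have key := sp_sym_lt (t := c * p.1) (y := p.2) hp hsv hlt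
    rw [hGv, hGu]
    simp only
    rw [hG sv p, hG su p]
    linarith
  have hle : ∀ p : ℝ × ℝ, Gv p ≤ Gu p := by
    intro p
    by_cases hp : p.2 = 0
    · simp [hGv, hGu, hp]
    · exact (hpt p hp).le
  have hD : Integrable (fun p => Gu p - Gv p) γ2 := hintGu.sub hintGv
  have hpos : 0 < ∫ p, (Gu p - Gv p) ∂γ2 := by
    rw [integral_pos_iff_support_of_nonneg_ae
      (Filter.Eventually.of_forall fun p => sub_nonneg.2 (hle p)) hD]
    have hsub : {p : ℝ × ℝ | p.2 ≠ 0} ⊆ Function.support fun p => Gu p - Gv p :=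
      fun p hp => sub_ne_zero.2 (hpt p hp).ne'
    have hzero : γ2 {p : ℝ × ℝ | p.2 = 0} = 0 := by
      have hset : {p : ℝ × ℝ | p.2 = 0} = Prod.snd ⁻¹' {0} := rfl
      rw [hset, ← Measure.map_apply measurable_snd (measurableSet_singleton 0)]
      have hsnd : Measure.map Prod.snd γ2 = gaussianReal 0 1 := by
        simp [Measure.map_snd_prod]
      rw [hsnd]
      exact gaussianReal_absolutelyContinuous 0 one_ne_zero (Real.volume_singleton)
    have hone : γ2 {p : ℝ × ℝ | p.2 ≠ 0} = 1 := by
      have hm : MeasurableSet {p : ℝ × ℝ | p.2 = 0} :=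
        (measurableSet_singleton 0).preimage measurable_snd
      have : {p : ℝ × ℝ | p.2 ≠ 0} = {p : ℝ × ℝ | p.2 = 0}ᶜ := rfl
      rw [this, measure_compl hm (measure_ne_top _ _), hzero, measure_univ]
      simp
    calc (0 : ENNReal) < 1 := by norm_num
      _ = γ2 {p : ℝ × ℝ | p.2 ≠ 0} := hone.symm
      _ ≤ γ2 (Function.support fun p => Gu p - Gv p) := measure_mono hsub
  rw [integral_sub hintGu hintGv] at hpos
  linarith
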